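/- Let V ∈ L³(ℝ³) be nonnegative, radial, supported in {|x| ≤ R}, and let f solve the scattering-type equation with 0 ≤ f ≤ 1. Define m(r) = r f(r) and suppose −m''(r) + (1/2)V(r)m(r) = λ m(r) on (0, L] with m(0) = 0. Then for r ∈ (0, R], |f'(r)| = (1/r²)|∫_0^r s m''(s) ds| ≤ C(‖V‖_3 + λ) for a constant C independent of r, where one uses f'(r) = (m'(r)r − m(r))/r² and integration by parts. -/

import Mathlib

open MeasureTheory
open scoped ENNReal NNReal

section Aux

open Measure Set Metric
open scoped ENNReal NNReal

local notation "E3" => EuclideanSpace ℝ (Fin 3)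

lemma lintegral_polar3 (g : ℝ → ℝ≥0∞) (hg : Measurable g) :
    ∫⁻ x : E3, g ‖x‖ =
      3 * volume (ball (0 : E3) 1) *
        ∫⁻ y in Ioi (0:ℝ), ENNReal.ofReal (y ^ 2) * g y := by
  have hdim : Module.finrank ℝ E3 = 3 := finrank_euclideanSpace_fin
  have h1 : ∫⁻ x : ({(0:E3)}ᶜ : Set E3), g ‖x.1‖
        ∂((volume : Measure E3).comap Subtype.val) = ∫⁻ x : E3, g ‖x‖ := by
    rw [lintegral_subtype_comap (measurableSet_singleton (0:E3)).compl (fun x => g ‖x‖),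
      restrict_compl_singleton]
  rw [← h1]
  have h2 := (volume.measurePreserving_homeomorphUnitSphereProd (E := E3)).lintegral_comp_emb
      (Homeomorph.measurableEmbedding _) (fun p => g p.2)
  have h2' : ∫⁻ x : ({(0:E3)}ᶜ : Set E3), g ‖x.1‖
        ∂((volume : Measure E3).comap Subtype.val) =
      ∫⁻ p : sphere (0:E3) 1 × Ioi (0:ℝ), g p.2
        ∂((volume : Measure E3).toSphere.prod (volumeIoiPow (Module.finrank ℝ E3 - 1))) := by
    rw [← h2]
    congr 1; funext x; simp
  rw [h2']
  rw [lintegral_prod (fun p : ↑(sphere (0:E3) 1) × ↑(Ioi (0:ℝ)) => g p.2.1)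
    ((hg.comp (measurable_subtype_coe.comp measurable_snd)).aemeasurable)]
  simp only [lintegral_const]
  rw [Measure.toSphere_apply_univ, hdim]
  have h3 : ∫⁻ y : Ioi (0:ℝ), g y ∂(volumeIoiPow (3 - 1)) =
      ∫⁻ y in Ioi (0:ℝ), ENNReal.ofReal (y ^ 2) * g y := by
    rw [show (3 - 1 : ℕ) = 2 from rfl]
    rw [Measure.volumeIoiPow, lintegral_withDensity_eq_lintegral_mul _
      (by exact ENNReal.measurable_ofReal.comp (measurable_subtype_coe.pow_const 2))
      (g := fun y : ↑(Ioi (0:ℝ)) => g ↑y) (by fun_prop)]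
    simp only [Pi.mul_apply]
    rw [lintegral_subtype_comap measurableSet_Ioi (fun y => ENNReal.ofReal (y ^ 2) * g y)]
  rw [h3]
  push_cast
  ring

section SqInt
open intervalIntegral
private lemma integral_sq_Ioc {r : ℝ} (hr : 0 ≤ r) :
    ∫ s in Set.Ioc (0:ℝ) r, s ^ 2 = r ^ 3 / 3 := by
  rw [← intervalIntegral.integral_of_le hr, integral_pow]
  norm_num
end SqInt

end Aux

set_option maxHeartbeats 1000000 in
/-- Let `V ∈ L³(ℝ³)` be nonnegative, radial (with radial profile `Vr`),
supported in `{|x| ≤ R}`, and let `0 ≤ f ≤ 1` solve the scattering-type equation: with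
`m(r) = r f(r)`, `−m'' + ½ V m = λ m` on `(0, L]`. Then for `r ∈ (0, R]`,
`f'(r) = (m'(r) r − m(r))/r² = (1/r²) ∫₀^r s m''(s) ds` and
`|f'(r)| ≤ C (‖V‖₃ + λ)` for a constant `C` independent of `r`. -/
theorem stmt14 (V : EuclideanSpace ℝ (Fin 3) → ℝ) (Vr : ℝ → ℝ)
    (f f' mder : ℝ → ℝ) (R L lam : ℝ)
    (hR : 0 < R) (hRL : R ≤ L) (hlam : 0 ≤ lam)
    (hVmeas : Measurable V) (hVpos : ∀ x, 0 ≤ V x)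
    (hVrad : ∀ x, V x = Vr ‖x‖)
    (hVsupp : ∀ x : EuclideanSpace ℝ (Fin 3), R < ‖x‖ → V x = 0)
    (hV3 : MemLp V 3 volume)
    (hf01 : ∀ r ∈ Set.Ioc (0:ℝ) L, f r ∈ Set.Icc (0:ℝ) 1)
    (hfder : ∀ r ∈ Set.Ioc (0:ℝ) L, HasDerivAt f (f' r) r)
    (hmder : ∀ r ∈ Set.Ioc (0:ℝ) L, HasDerivAt (fun t => t * f t) (mder r) r)
    (hODE : ∀ r ∈ Set.Ioc (0:ℝ) L,
      HasDerivAt mder ((1/2) * Vr r * (r * f r) - lam * (r * f r)) r) :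
    ∃ C > 0, ∀ r ∈ Set.Ioc (0:ℝ) R,
      f' r = (mder r * r - r * f r) / r ^ 2 ∧
      |f' r| = (1 / r ^ 2) *
        |∫ s in (0:ℝ)..r, s * ((1/2) * Vr s * (s * f s) - lam * (s * f s))| ∧
      |f' r| ≤ C * ((eLpNorm V 3 volume).toReal + lam) := by
  classical
  have hL : 0 < L := lt_of_lt_of_le hR hRL
  -- the radial profile along a fixed direction
  set e : EuclideanSpace ℝ (Fin 3) := EuclideanSpace.single 0 1 with he_def
  have he : ‖e‖ = 1 := by simp [he_def]
  set W : ℝ → ℝ := fun y => V (y • e) with hW_def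
  have hWmeas : Measurable W := hVmeas.comp (measurable_id.smul_const e)
  have hW0 : ∀ y, 0 ≤ W y := fun y => hVpos _
  have hWVr : ∀ y : ℝ, 0 ≤ y → Vr y = W y := by
    intro y hy
    have hn : ‖y • e‖ = y := by
      rw [norm_smul, he, mul_one, Real.norm_eq_abs, abs_of_nonneg hy]
    rw [hW_def]
    simp only
    rw [hVrad (y • e), hn]
  have hWx : ∀ x : EuclideanSpace ℝ (Fin 3), V x = W ‖x‖ := fun x => by
    rw [hVrad x, hWVr _ (norm_nonneg x)]
  -- `L³` information via polar coordinates
  set N : ℝ≥0∞ := eLpNorm V 3 volume with hN_def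
  have hNlt : N ≠ ⊤ := hV3.2.ne
  set v : ℝ≥0∞ := volume (Metric.ball (0 : EuclideanSpace ℝ (Fin 3)) 1) with hv_def
  have hv0 : v ≠ 0 := (Metric.measure_ball_pos volume (0 : EuclideanSpace ℝ (Fin 3)) one_pos).ne'
  set I : ℝ≥0∞ := ∫⁻ y in Set.Ioi (0:ℝ), ENNReal.ofReal (y ^ 2 * W y ^ 3) with hI_def
  have hpolar : 3 * v * I = N ^ (3:ℝ) := by
    have hp := lintegral_polar3 (fun y => ENNReal.ofReal (W y ^ 3))
      (ENNReal.measurable_ofReal.comp (hWmeas.pow_const 3))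
    have hIeq : I = ∫⁻ y in Set.Ioi (0:ℝ),
        ENNReal.ofReal (y ^ 2) * ENNReal.ofReal (W y ^ 3) := by
      rw [hI_def]
      exact lintegral_congr fun y => ENNReal.ofReal_mul (sq_nonneg y)
    have hLHS : ∫⁻ x : EuclideanSpace ℝ (Fin 3), ENNReal.ofReal (W ‖x‖ ^ 3)
        = N ^ (3:ℝ) := by
      have h1 : ∀ x : EuclideanSpace ℝ (Fin 3),
          ENNReal.ofReal (W ‖x‖ ^ 3) = ‖V x‖ₑ ^ (3:ℝ) := by
        intro x
        rw [← hWx x, ← ofReal_norm, Real.norm_of_nonneg (hVpos x),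
          show ((3:ℝ)) = ((3:ℕ):ℝ) by norm_num, ENNReal.rpow_natCast,
          ← ENNReal.ofReal_pow (hVpos x)]
      rw [lintegral_congr h1, hN_def,
        eLpNorm_eq_lintegral_rpow_enorm_toReal (by norm_num) (by norm_num)]
      rw [← ENNReal.rpow_mul]
      norm_num
    rw [hIeq, ← hp, hLHS]
  have hIne : I ≠ ⊤ := by
    intro hI
    have h3v : (3:ℝ≥0∞) * v ≠ 0 := by
      simp [hv0]
    rw [hI, ENNReal.mul_top h3v] at hpolar
    exact (ENNReal.rpow_lt_top_of_nonneg (by norm_num) hNlt).ne hpolar.symm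
  set J : ℝ := I.toReal with hJ_def
  have hJ0 : 0 ≤ J := ENNReal.toReal_nonneg
  set B : ℝ := J ^ ((3:ℝ)⁻¹) with hB_def
  have hB0 : 0 ≤ B := Real.rpow_nonneg hJ0 _
  have hJB : B ^ 3 = J := by
    rw [hB_def]
    exact_mod_cast Real.rpow_inv_natCast_pow hJ0 (by norm_num)
  -- integrability facts
  have hP3meas : Measurable (fun s : ℝ => s ^ 2 * W s ^ 3) :=
    (measurable_id.pow_const 2).mul (hWmeas.pow_const 3)
  have hP3 : IntegrableOn (fun s : ℝ => s ^ 2 * W s ^ 3) (Set.Ioc 0 R) volume := by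
    refine ⟨hP3meas.aestronglyMeasurable, ?_⟩
    rw [hasFiniteIntegral_iff_norm]
    have hle : ∫⁻ s in Set.Ioc (0:ℝ) R, ENNReal.ofReal ‖s ^ 2 * W s ^ 3‖ ≤ I := by
      have h1 : ∀ s : ℝ, ENNReal.ofReal ‖s ^ 2 * W s ^ 3‖
          = ENNReal.ofReal (s ^ 2 * W s ^ 3) := by
        intro s
        rw [Real.norm_of_nonneg (mul_nonneg (sq_nonneg s) (pow_nonneg (hW0 s) 3))]
      simp only [h1]
      rw [hI_def]
      exact lintegral_mono' (Measure.restrict_mono Set.Ioc_subset_Ioi_self le_rfl) le_rfl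
    exact lt_of_le_of_lt hle (lt_of_le_of_ne le_top hIne)
  have hP3J : ∀ r : ℝ, 0 < r → r ≤ R →
      ∫ s in Set.Ioc (0:ℝ) r, s ^ 2 * W s ^ 3 ≤ J := by
    intro r hr hrR
    have hint : ∫ s in Set.Ioc (0:ℝ) r, s ^ 2 * W s ^ 3
        = (∫⁻ s in Set.Ioc (0:ℝ) r, ENNReal.ofReal (s ^ 2 * W s ^ 3)).toReal := by
      exact integral_eq_lintegral_of_nonneg_ae
        (Filter.Eventually.of_forall fun s =>
          mul_nonneg (sq_nonneg s) (pow_nonneg (hW0 s) 3))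
        hP3meas.aestronglyMeasurable
    rw [hint, hJ_def]
    refine ENNReal.toReal_mono hIne ?_
    rw [hI_def]
    exact lintegral_mono' (Measure.restrict_mono Set.Ioc_subset_Ioi_self le_rfl) le_rfl
  have hsq_int : ∀ r : ℝ, IntegrableOn (fun s : ℝ => s ^ 2) (Set.Ioc 0 r) volume :=
    fun r => (continuous_pow 2).integrableOn_Ioc
  have hsqW_int : IntegrableOn (fun s : ℝ => s ^ 2 * W s) (Set.Ioc 0 R) volume := by
    refine Integrable.mono' (hP3.add (hsq_int R))
      ((measurable_id.pow_const 2).mul hWmeas).aestronglyMeasurable ?_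
    filter_upwards [ae_restrict_mem measurableSet_Ioc] with s hs
    rw [Real.norm_of_nonneg (mul_nonneg (sq_nonneg s) (hW0 s))]
    simp only [Pi.add_apply]
    have hcase : W s ≤ W s ^ 3 + 1 := by
      rcases le_or_gt (W s) 1 with h | h
      · nlinarith [pow_nonneg (hW0 s) 3]
      · nlinarith [mul_nonneg (mul_nonneg (hW0 s) (sub_nonneg.2 h.le))
          (by linarith : (0:ℝ) ≤ W s + 1)]
    nlinarith [mul_le_mul_of_nonneg_left hcase (sq_nonneg s)]
  have hsW_int : IntegrableOn (fun s : ℝ => s * W s) (Set.Ioc 0 R) volume := by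
    refine Integrable.mono'
      ((Real.continuous_sqrt.integrableOn_Ioc).add hP3)
      (measurable_id.mul hWmeas).aestronglyMeasurable ?_
    filter_upwards [ae_restrict_mem measurableSet_Ioc] with s hs
    rw [Real.norm_of_nonneg (mul_nonneg hs.1.le (hW0 s))]
    simp only [Pi.add_apply]
    have hsqrt : Real.sqrt s * Real.sqrt s = s := Real.mul_self_sqrt hs.1.le
    have hsqrtpos : 0 < Real.sqrt s := Real.sqrt_pos.mpr hs.1
    rcases le_or_gt (W s) (Real.sqrt s)⁻¹ with h | h
    · have hkey : s * W s ≤ Real.sqrt s := by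
        calc s * W s ≤ s * (Real.sqrt s)⁻¹ := mul_le_mul_of_nonneg_left h hs.1.le
          _ = Real.sqrt s := by
              rw [← hsqrt]
              field_simp
              rw [Real.sqrt_sq hsqrtpos.le]
      nlinarith [mul_nonneg (sq_nonneg s) (pow_nonneg (hW0 s) 3)]
    · have h3 : (Real.sqrt s)⁻¹ * (Real.sqrt s)⁻¹ = s⁻¹ := by
        rw [← mul_inv, hsqrt]
      have h2 : (Real.sqrt s)⁻¹ * (Real.sqrt s)⁻¹ ≤ W s * W s :=
        mul_le_mul h.le h.le (by positivity) (hW0 s)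
      have h1 : (1:ℝ) ≤ s * (W s * W s) := by
        calc (1:ℝ) = s * s⁻¹ := (mul_inv_cancel₀ hs.1.ne').symm
          _ ≤ s * (W s * W s) := by
              rw [← h3]
              exact mul_le_mul_of_nonneg_left h2 hs.1.le
      have hkey : s * W s ≤ s ^ 2 * W s ^ 3 := by
        nlinarith [mul_le_mul_of_nonneg_left h1 (mul_nonneg hs.1.le (hW0 s))]
      linarith [Real.sqrt_nonneg s]
  -- main per-radius estimate
  have main : ∀ r ∈ Set.Ioc (0:ℝ) R,
      f' r = (mder r * r - r * f r) / r ^ 2 ∧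
      |f' r| = (1 / r ^ 2) *
        |∫ s in (0:ℝ)..r, s * ((1/2) * Vr s * (s * f s) - lam * (s * f s))| ∧
      |f' r| ≤ 2/3 * B + lam * (R/3) := by
    intro r hr
    obtain ⟨hr0, hrR⟩ := hr
    have hrL : r ≤ L := le_trans hrR hRL
    have hrmem : r ∈ Set.Ioc (0:ℝ) L := ⟨hr0, hrL⟩
    have hsub : Set.Ioc (0:ℝ) r ⊆ Set.Ioc (0:ℝ) R := Set.Ioc_subset_Ioc_right hrR
    have hfr01 := hf01 r hrmem
    -- continuity/measurability of f on the interval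
    have hfcont : ContinuousOn f (Set.Ioc 0 L) :=
      fun s hs => (hfder s hs).continuousAt.continuousWithinAt
    have hfmeas : AEStronglyMeasurable f (volume.restrict (Set.Ioc 0 r)) :=
      (hfcont.mono (Set.Ioc_subset_Ioc_right hrL)).aestronglyMeasurable measurableSet_Ioc
    -- product rule: mder r = f r + r * f' r
    have hprod : HasDerivAt (fun t => t * f t) (1 * f r + r * f' r) r := by
      exact (hasDerivAt_id' r).mul (hfder r hrmem)
    have hmr : mder r = f r + r * f' r := by
      have := (hmder r hrmem).unique hprod
      linarith [this]
    have hfr' : f' r = (mder r * r - r * f r) / r ^ 2 := by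
      rw [hmr]; field_simp; ring
    refine ⟨hfr', ?_⟩
    -- the W-version of the integrand
    set gW : ℝ → ℝ := fun s => (1/2) * W s * (s^2 * f s) - lam * (s^2 * f s) with hgW_def
    set G : ℝ → ℝ := fun s => s * mder s - s * f s with hG_def
    have hGr : G r = mder r * r - r * f r := by simp only [hG_def]; ring
    -- measurability of gW
    have hs2f : AEStronglyMeasurable (fun s : ℝ => s^2 * f s)
        (volume.restrict (Set.Ioc 0 r)) :=
      ((measurable_id.pow_const 2).aestronglyMeasurable).mul hfmeas
    have hgWmeas : AEStronglyMeasurable gW (volume.restrict (Set.Ioc 0 r)) :=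
      ((hWmeas.aestronglyMeasurable.const_mul (1/2)).mul hs2f).sub (hs2f.const_mul lam)
    -- integrability of gW on (0, r]
    have hdom_int : IntegrableOn
        (fun s : ℝ => (1/2) * (s^2 * W s) + lam * s^2) (Set.Ioc 0 r) volume :=
      ((hsqW_int.mono_set hsub).const_mul (1/2)).add ((hsq_int r).const_mul lam)
    have hgW_bound : ∀ s ∈ Set.Ioc (0:ℝ) r, |gW s| ≤ (1/2) * (s^2 * W s) + lam * s^2 := by
      intro s hs
      have hf := hf01 s ⟨hs.1, le_trans hs.2 hrL⟩
      have h1 : 0 ≤ s^2 * f s := mul_nonneg (sq_nonneg s) hf.1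
      have h2 : s^2 * f s ≤ s^2 := by nlinarith [sq_nonneg s, hf.2]
      have h3 : W s * (s^2 * f s) ≤ W s * s^2 := mul_le_mul_of_nonneg_left h2 (hW0 s)
      have h4 : 0 ≤ W s * (s^2 * f s) := mul_nonneg (hW0 s) h1
      have h5 : lam * (s^2 * f s) ≤ lam * s^2 := mul_le_mul_of_nonneg_left h2 hlam
      have h6 : 0 ≤ lam * (s^2 * f s) := mul_nonneg hlam h1
      have hval : gW s = (1/2) * W s * (s^2 * f s) - lam * (s^2 * f s) := by
        simp only [hgW_def]
      rw [hval, abs_le]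
      constructor
      · nlinarith [hW0 s]
      · nlinarith [hW0 s]
    have hgW_int : IntegrableOn gW (Set.Ioc 0 r) volume := by
      refine Integrable.mono' hdom_int hgWmeas ?_
      filter_upwards [ae_restrict_mem measurableSet_Ioc] with s hs
      rw [Real.norm_eq_abs]
      exact hgW_bound s hs
    have hgW_ii : IntervalIntegrable gW volume 0 r :=
      (intervalIntegrable_iff_integrableOn_Ioc_of_le hr0.le).mpr hgW_int
    -- derivative of G is gW on (0, L]
    have hG : ∀ s ∈ Set.Ioc (0:ℝ) L, HasDerivAt G (gW s) s := by
      intro s hs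
      have h1 : HasDerivAt (fun t => t * mder t)
          (1 * mder s + s * ((1/2) * Vr s * (s * f s) - lam * (s * f s))) s := by
        exact (hasDerivAt_id' s).mul (hODE s hs)
      have h2 := h1.sub (hmder s hs)
      have h3 : gW s = (1 * mder s + s * ((1/2) * Vr s * (s * f s) - lam * (s * f s)))
          - mder s := by
        rw [hgW_def, hWVr s hs.1.le]; ring
      rw [h3]
      exact h2
    -- FTC on [ε, r]
    have huIcc : Set.uIcc (0:ℝ) r = Set.Icc 0 r := Set.uIcc_of_le hr0.le
    have hfract : ∀ ε ∈ Set.Ioo (0:ℝ) r,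
        G ε = (G r - ∫ s in (0:ℝ)..r, gW s) + ∫ s in (0:ℝ)..ε, gW s := by
      intro ε hε
      have hεmem : ε ∈ Set.uIcc (0:ℝ) r := by rw [huIcc]; exact ⟨hε.1.le, hε.2.le⟩
      have hi1 : IntervalIntegrable gW volume 0 ε :=
        hgW_ii.mono_set (Set.uIcc_subset_uIcc Set.left_mem_uIcc hεmem)
      have hi2 : IntervalIntegrable gW volume ε r :=
        hgW_ii.mono_set (Set.uIcc_subset_uIcc hεmem Set.right_mem_uIcc)
      have hFTC : ∫ s in ε..r, gW s = G r - G ε := by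
        refine intervalIntegral.integral_eq_sub_of_hasDerivAt (fun x hx => ?_) hi2
        rw [Set.uIcc_of_le hε.2.le] at hx
        exact hG x ⟨lt_of_lt_of_le hε.1 hx.1, le_trans hx.2 hrL⟩
      have hadd := intervalIntegral.integral_add_adjacent_intervals hi1 hi2
      linarith
    -- limits as ε → 0⁺
    haveI hlne : (nhdsWithin (0:ℝ) (Set.Ioo 0 r)).NeBot := by
      apply mem_closure_iff_nhdsWithin_neBot.mp
      rw [closure_Ioo hr0.ne]
      exact ⟨le_refl 0, hr0.le⟩
    have ht1 : Filter.Tendsto (fun ε => ∫ s in (0:ℝ)..ε, gW s)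
        (nhdsWithin (0:ℝ) (Set.Ioo 0 r)) (nhds 0) := by
      have hc := intervalIntegral.continuousOn_primitive_interval' hgW_ii
        (Set.left_mem_uIcc (a := (0:ℝ)) (b := r))
      have := (hc 0 Set.left_mem_uIcc).tendsto
      rw [intervalIntegral.integral_same] at this
      exact this.mono_left (nhdsWithin_mono 0 (by rw [huIcc]; exact Set.Ioo_subset_Icc_self))
    -- bound on mder near 0
    set dm : ℝ → ℝ := fun s => (1/2) * Vr s * (s * f s) - lam * (s * f s) with hdm_def
    have hdm_meas : AEStronglyMeasurable dm (volume.restrict (Set.Ioc 0 r)) := by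
      have hsf : AEStronglyMeasurable (fun s : ℝ => s * f s)
          (volume.restrict (Set.Ioc 0 r)) := aestronglyMeasurable_id.mul hfmeas
      refine (((hWmeas.aestronglyMeasurable.const_mul (1/2)).mul hsf).sub
        (hsf.const_mul lam)).congr ?_
      filter_upwards [ae_restrict_mem measurableSet_Ioc] with s hs
      simp only [hdm_def, Pi.mul_apply, Pi.sub_apply]
      rw [hWVr s hs.1.le]
    have hdm_bound : ∀ s ∈ Set.Ioc (0:ℝ) r, |dm s| ≤ (1/2) * (s * W s) + lam * s := by
      intro s hs
      have hf := hf01 s ⟨hs.1, le_trans hs.2 hrL⟩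
      have h1 : 0 ≤ s * f s := mul_nonneg hs.1.le hf.1
      have h2 : s * f s ≤ s := by nlinarith [hf.2, hs.1]
      have h3 : W s * (s * f s) ≤ W s * s := mul_le_mul_of_nonneg_left h2 (hW0 s)
      have h4 : 0 ≤ W s * (s * f s) := mul_nonneg (hW0 s) h1
      have h5 : lam * (s * f s) ≤ lam * s := mul_le_mul_of_nonneg_left h2 hlam
      have h6 : 0 ≤ lam * (s * f s) := mul_nonneg hlam h1
      have hval : dm s = (1/2) * W s * (s * f s) - lam * (s * f s) := by
        simp only [hdm_def]; rw [hWVr s hs.1.le]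
      rw [hval, abs_le]
      constructor
      · nlinarith [hW0 s]
      · nlinarith [hW0 s]
    have hdm2_int : IntegrableOn (fun s : ℝ => (1/2) * (s * W s) + lam * s)
        (Set.Ioc 0 r) volume :=
      ((hsW_int.mono_set hsub).const_mul (1/2)).add (Integrable.const_mul (show IntegrableOn (fun s : ℝ => s) (Set.Ioc 0 r) volume from continuous_id.integrableOn_Ioc) lam)
    have hdm_int : IntegrableOn dm (Set.Ioc 0 r) volume := by
      refine Integrable.mono' hdm2_int hdm_meas ?_
      filter_upwards [ae_restrict_mem measurableSet_Ioc] with s hs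
      rw [Real.norm_eq_abs]
      exact hdm_bound s hs
    have hdm_ii : IntervalIntegrable dm volume 0 r :=
      (intervalIntegrable_iff_integrableOn_Ioc_of_le hr0.le).mpr hdm_int
    set M : ℝ := ∫ s in Set.Ioc (0:ℝ) r, ((1/2) * (s * W s) + lam * s) with hM_def
    have hmd_bound : ∀ ε ∈ Set.Ioo (0:ℝ) r, |mder ε| ≤ |mder r| + M := by
      intro ε hε
      have hεmem : ε ∈ Set.uIcc (0:ℝ) r := by rw [huIcc]; exact ⟨hε.1.le, hε.2.le⟩
      have hi2 : IntervalIntegrable dm volume ε r :=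
        hdm_ii.mono_set (Set.uIcc_subset_uIcc hεmem Set.right_mem_uIcc)
      have hFTC2 : ∫ s in ε..r, dm s = mder r - mder ε := by
        refine intervalIntegral.integral_eq_sub_of_hasDerivAt (fun x hx => ?_) hi2
        rw [Set.uIcc_of_le hε.2.le] at hx
        exact hODE x ⟨lt_of_lt_of_le hε.1 hx.1, le_trans hx.2 hrL⟩
      have habs : |∫ s in ε..r, dm s| ≤ M := by
        have hstep1 : |∫ s in ε..r, dm s| ≤ ∫ s in ε..r, |dm s| :=
          intervalIntegral.abs_integral_le_integral_abs hε.2.le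
        have hstep2 : ∫ s in ε..r, |dm s| = ∫ s in Set.Ioc ε r, |dm s| :=
          intervalIntegral.integral_of_le hε.2.le
        have hsub2 : Set.Ioc ε r ⊆ Set.Ioc (0:ℝ) r := Set.Ioc_subset_Ioc_left hε.1.le
        have hstep3 : ∫ s in Set.Ioc ε r, |dm s| ≤
            ∫ s in Set.Ioc ε r, ((1/2) * (s * W s) + lam * s) := by
          refine setIntegral_mono_on ((hdm_int.mono_set hsub2).abs)
            (hdm2_int.mono_set hsub2) measurableSet_Ioc ?_
          exact fun s hs => hdm_bound s (hsub2 hs)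
        have hstep4 : ∫ s in Set.Ioc ε r, ((1/2) * (s * W s) + lam * s) ≤ M := by
          rw [hM_def]
          refine setIntegral_mono_set hdm2_int ?_ (HasSubset.Subset.eventuallyLE hsub2)
          filter_upwards [ae_restrict_mem measurableSet_Ioc] with s hs
          simp only [Pi.zero_apply]
          nlinarith [hs.1, mul_nonneg hs.1.le (hW0 s), mul_nonneg hlam hs.1.le]
        linarith
      have hmeq : mder ε = mder r - ∫ s in ε..r, dm s := by linarith
      rw [hmeq]
      calc |mder r - ∫ s in ε..r, dm s| ≤ |mder r| + |∫ s in ε..r, dm s| := abs_sub _ _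
        _ ≤ |mder r| + M := by linarith
    have ht2 : Filter.Tendsto G (nhdsWithin (0:ℝ) (Set.Ioo 0 r)) (nhds 0) := by
      have hGbound : ∀ ε ∈ Set.Ioo (0:ℝ) r, |G ε| ≤ ε * ((|mder r| + M) + 1) := by
        intro ε hε
        have hf := hf01 ε ⟨hε.1, le_trans hε.2.le hrL⟩
        have h1 := hmd_bound ε hε
        have h2 : |f ε| ≤ 1 := by rw [abs_le]; exact ⟨by linarith [hf.1], hf.2⟩
        have : |G ε| ≤ ε * |mder ε| + ε * |f ε| := by
          simp only [hG_def]
          calc |ε * mder ε - ε * f ε| ≤ |ε * mder ε| + |ε * f ε| := abs_sub _ _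
            _ = ε * |mder ε| + ε * |f ε| := by
                rw [abs_mul, abs_mul, abs_of_pos hε.1]
        have hεle : ε * |mder ε| ≤ ε * (|mder r| + M) :=
          mul_le_mul_of_nonneg_left h1 hε.1.le
        have hεle2 : ε * |f ε| ≤ ε * 1 := mul_le_mul_of_nonneg_left h2 hε.1.le
        nlinarith
      have htb : Filter.Tendsto (fun ε : ℝ => ε * ((|mder r| + M) + 1))
          (nhdsWithin (0:ℝ) (Set.Ioo 0 r)) (nhds 0) := by
        have h0 : Filter.Tendsto (fun ε : ℝ => ε * ((|mder r| + M) + 1)) (nhds 0)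
            (nhds (0 * ((|mder r| + M) + 1))) :=
          (continuous_id.mul continuous_const).tendsto 0
        rw [zero_mul] at h0
        exact h0.mono_left nhdsWithin_le_nhds
      have htbn : Filter.Tendsto (fun ε : ℝ => -(ε * ((|mder r| + M) + 1)))
          (nhdsWithin (0:ℝ) (Set.Ioo 0 r)) (nhds 0) := by
        simpa using htb.neg
      refine tendsto_of_tendsto_of_tendsto_of_le_of_le' htbn htb ?_ ?_
      · filter_upwards [self_mem_nhdsWithin] with ε hε
        have := hGbound ε hε
        rw [abs_le] at this
        linarith [this.1]
      · filter_upwards [self_mem_nhdsWithin] with ε hε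
        have := hGbound ε hε
        rw [abs_le] at this
        linarith [this.2]
    -- conclude the FTC identity on (0, r]
    have hkeyeq : ∫ s in (0:ℝ)..r, gW s = G r := by
      have hA : Filter.Tendsto G (nhdsWithin (0:ℝ) (Set.Ioo 0 r))
          (nhds ((G r - ∫ s in (0:ℝ)..r, gW s) + 0)) := by
        refine Filter.Tendsto.congr' ?_ (Filter.Tendsto.add tendsto_const_nhds ht1)
        filter_upwards [self_mem_nhdsWithin] with ε hε
        exact (hfract ε hε).symm
      have := tendsto_nhds_unique ht2 hA
      linarith
    -- identify the statement's integral with the gW integral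
    have hint_eq : ∫ s in (0:ℝ)..r, s * ((1/2) * Vr s * (s * f s) - lam * (s * f s))
        = ∫ s in (0:ℝ)..r, gW s := by
      refine intervalIntegral.integral_congr fun s hs => ?_
      rw [huIcc] at hs
      rw [hgW_def, hWVr s hs.1]
      ring
    have hr2pos : (0:ℝ) < r ^ 2 := by positivity
    have h2nd : |f' r| = (1 / r ^ 2) *
        |∫ s in (0:ℝ)..r, s * ((1/2) * Vr s * (s * f s) - lam * (s * f s))| := by
      rw [hfr', hint_eq, hkeyeq, hGr, abs_div, abs_of_pos hr2pos]
      ring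
    refine ⟨h2nd, ?_⟩
    -- quantitative bound
    have hK : ∀ K : ℝ, 0 < K →
        ∫ s in Set.Ioc (0:ℝ) r, s^2 * W s ≤ K * (r^3/3) + J / K^2 := by
      intro K hKpos
      have hpt : ∀ s ∈ Set.Ioc (0:ℝ) r, s^2 * W s ≤ K * s^2 + (s^2 * W s^3) / K^2 := by
        intro s hs
        rcases le_or_gt (W s) K with h | h
        · have h1 : s^2 * W s ≤ K * s^2 := by nlinarith [sq_nonneg s]
          have h2 : 0 ≤ (s^2 * W s^3) / K^2 :=
            div_nonneg (mul_nonneg (sq_nonneg s) (pow_nonneg (hW0 s) 3)) (sq_nonneg K)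
          linarith
        · have hK2 : K^2 ≤ W s^2 := pow_le_pow_left₀ hKpos.le h.le 2
          have h1 : s^2 * W s ≤ (s^2 * W s^3) / K^2 := by
            rw [le_div_iff₀ (by positivity)]
            nlinarith [mul_nonneg (mul_nonneg (sq_nonneg s) (hW0 s)) (sub_nonneg.2 hK2)]
          nlinarith [mul_nonneg hKpos.le (sq_nonneg s)]
      have hmono := setIntegral_mono_on (hsqW_int.mono_set hsub)
        (((hsq_int r).const_mul K).add ((hP3.mono_set hsub).div_const (K^2)))
        measurableSet_Ioc hpt
      have hsplit : ∫ s in Set.Ioc (0:ℝ) r, (K * s^2 + (s^2 * W s^3) / K^2)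
          = K * (∫ s in Set.Ioc (0:ℝ) r, s^2)
            + (∫ s in Set.Ioc (0:ℝ) r, s^2 * W s^3) / K^2 := by
        rw [integral_add ((hsq_int r).const_mul K) ((hP3.mono_set hsub).div_const _),
          integral_const_mul, integral_div]
      have hsq_val : ∫ s in Set.Ioc (0:ℝ) r, s^2 = r^3/3 := integral_sq_Ioc hr0.le
      have hJle : (∫ s in Set.Ioc (0:ℝ) r, s^2 * W s^3) / K^2 ≤ J / K^2 := by
        gcongr
        exact hP3J r hr0 hrR
      simp only [Pi.add_apply] at hmono
      rw [hsplit, hsq_val] at hmono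
      linarith
    have hHolder : ∫ s in Set.Ioc (0:ℝ) r, s^2 * W s ≤ 4/3 * (B * r^2) := by
      rcases eq_or_lt_of_le hB0 with hB | hB
      · have hJz : J = 0 := by rw [← hJB, ← hB]; norm_num
        have hz : ∫ s in Set.Ioc (0:ℝ) r, s^2 * W s ≤ 0 := by
          refine le_of_forall_pos_le_add fun ε hε => ?_
          have hr3 : (0:ℝ) < r^3/3 := by positivity
          have := hK (ε / (r^3/3)) (by positivity)
          rw [hJz, zero_div, add_zero, div_mul_cancel₀ _ hr3.ne'] at this
          linarith
        calc ∫ s in Set.Ioc (0:ℝ) r, s^2 * W s ≤ 0 := hz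
          _ ≤ 4/3 * (B * r^2) := by rw [← hB]; norm_num
      · have hKB := hK (B/r) (div_pos hB hr0)
        have heq : (B/r) * (r^3/3) + J / (B/r)^2 = 4/3 * (B * r^2) := by
          rw [← hJB]; field_simp; ring
        linarith
    -- put everything together
    have hintabs : |∫ s in (0:ℝ)..r, gW s| ≤
        (1/2) * (∫ s in Set.Ioc (0:ℝ) r, s^2 * W s) + lam * (r^3/3) := by
      have hstep1 : |∫ s in (0:ℝ)..r, gW s| ≤ ∫ s in (0:ℝ)..r, |gW s| :=
        intervalIntegral.abs_integral_le_integral_abs hr0.le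
      have hstep2 : ∫ s in (0:ℝ)..r, |gW s| = ∫ s in Set.Ioc (0:ℝ) r, |gW s| :=
        intervalIntegral.integral_of_le hr0.le
      have hstep3 : ∫ s in Set.Ioc (0:ℝ) r, |gW s| ≤
          ∫ s in Set.Ioc (0:ℝ) r, ((1/2) * (s^2 * W s) + lam * s^2) :=
        setIntegral_mono_on hgW_int.abs hdom_int measurableSet_Ioc hgW_bound
      have hstep4 : ∫ s in Set.Ioc (0:ℝ) r, ((1/2) * (s^2 * W s) + lam * s^2)
          = (1/2) * (∫ s in Set.Ioc (0:ℝ) r, s^2 * W s)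
            + lam * (∫ s in Set.Ioc (0:ℝ) r, s^2) := by
        rw [integral_add ((hsqW_int.mono_set hsub).const_mul (1/2))
          ((hsq_int r).const_mul lam), integral_const_mul, integral_const_mul]
      have hsq_val : ∫ s in Set.Ioc (0:ℝ) r, s^2 = r^3/3 := integral_sq_Ioc hr0.le
      rw [hsq_val] at hstep4
      linarith
    have hfin : |f' r| ≤ 2/3 * B + lam * (r/3) := by
      rw [h2nd, hint_eq]
      have h1 : |∫ s in (0:ℝ)..r, gW s| ≤
          (1/2) * (4/3 * (B * r^2)) + lam * (r^3/3) := by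
        have := mul_le_mul_of_nonneg_left hHolder (by norm_num : (0:ℝ) ≤ 1/2)
        linarith
      have h2 : (1 / r^2) * |∫ s in (0:ℝ)..r, gW s| ≤
          (1 / r^2) * ((1/2) * (4/3 * (B * r^2)) + lam * (r^3/3)) :=
        mul_le_mul_of_nonneg_left h1 (by positivity)
      have h3 : (1 / r^2) * ((1/2) * (4/3 * (B * r^2)) + lam * (r^3/3))
          = 2/3 * B + lam * (r/3) := by
        field_simp
        ring
      linarith
    have hlamr : lam * (r/3) ≤ lam * (R/3) := by
      apply mul_le_mul_of_nonneg_left _ hlam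
      linarith
    linarith
  -- assemble the constant
  have hA0 : 0 ≤ N.toReal := ENNReal.toReal_nonneg
  by_cases hAl : N.toReal + lam = 0
  · refine ⟨1, one_pos, fun r hr => ?_⟩
    obtain ⟨c1, c2, c3⟩ := main r hr
    refine ⟨c1, c2, ?_⟩
    have hA : N.toReal = 0 := by linarith
    have hlam0 : lam = 0 := by linarith
    have hN0 : N = 0 := by
      rcases (ENNReal.toReal_eq_zero_iff N).mp hA with h | h
      · exact h
      · exact absurd h hNlt
    have hI0 : I = 0 := by
      have hz : (3:ℝ≥0∞) * v * I = 0 := by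
        rw [hpolar, hN0, ENNReal.zero_rpow_of_pos (by norm_num)]
      rcases mul_eq_zero.mp hz with h | h
      · exact absurd h (by simp [hv0])
      · exact h
    have hJz : J = 0 := by rw [hJ_def, hI0]; simp
    have hBz : B = 0 := by rw [hB_def, hJz, Real.zero_rpow (by norm_num)]
    calc |f' r| ≤ 2/3 * B + lam * (R/3) := c3
      _ = 0 := by rw [hBz, hlam0]; ring
      _ ≤ 1 * (N.toReal + lam) := by rw [hAl]; norm_num
  · have hpos : 0 < N.toReal + lam := lt_of_le_of_ne (add_nonneg hA0 hlam) (Ne.symm hAl)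
    have hnum : 0 ≤ 2/3 * B + lam * (R/3) := by
      have := mul_nonneg hlam (by linarith : (0:ℝ) ≤ R/3)
      linarith [hB0]
    refine ⟨(2/3 * B + lam * (R/3)) / (N.toReal + lam) + 1,
      add_pos_of_nonneg_of_pos (div_nonneg hnum hpos.le) one_pos, fun r hr => ?_⟩
    obtain ⟨c1, c2, c3⟩ := main r hr
    refine ⟨c1, c2, le_trans c3 ?_⟩
    rw [add_mul, div_mul_cancel₀ _ hpos.ne', one_mul]
    linarith
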